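/- Let A be an n×n matrix over the max-plus algebra ℝ_max and let r ∈ ℝ_max^n with r ≠ (ε,…,ε). Suppose there exist integers p > q ≥ 0 and a real number c ≥ 0 such that A^{⊗p} ⊗ r = c ⊗ (A^{⊗q} ⊗ r) (i.e. (A^{⊗p} ⊗ r)_i = c + (A^{⊗q} ⊗ r)_i for all i). Set λ = c/(p−q) and v = ⊕_{i=1}^{p−q} ( λ^{⊗(p−q−i)} ⊗ A^{⊗(q+i−1)} ⊗ r ), i.e. v_s = max_{1 ≤ i ≤ p−q} ( (p−q−i)·λ + (A^{⊗(q+i−1)} ⊗ r)_s ). If v ≠ (ε,…,ε), then λ is an eigenvalue of A with eigenvector v: A ⊗ v = λ ⊗ v. -/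
import Mathlib


/-- Max-plus matrix–vector product over `ℝ_max = ℝ ∪ {−∞}` (modelled as `WithBot ℝ`):
`(A ⊗ v) i = max_j (A i j + v j)`. -/
def mpMulVec {n : ℕ} (A : Matrix (Fin n) (Fin n) (WithBot ℝ)) (v : Fin n → WithBot ℝ) :
    Fin n → WithBot ℝ :=
  fun i => Finset.univ.sup fun j => A i j + v j

/-- Max-plus matrix product: `(A ⊗ B) i j = max_k (A i k + B k j)`. -/
def mpMul {n : ℕ} (A B : Matrix (Fin n) (Fin n) (WithBot ℝ)) :
    Matrix (Fin n) (Fin n) (WithBot ℝ) :=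
  Matrix.of fun i j => Finset.univ.sup fun k => A i k + B k j

/-- The max-plus identity matrix: `e = 0` on the diagonal, `ε = −∞` elsewhere. -/
def mpId (n : ℕ) : Matrix (Fin n) (Fin n) (WithBot ℝ) :=
  Matrix.of fun i j => if i = j then ((0 : ℝ) : WithBot ℝ) else ⊥

/-- Max-plus matrix power: `A^{⊗0} = E_n`, `A^{⊗(k+1)} = A ⊗ A^{⊗k}`. -/
def mpPow {n : ℕ} (A : Matrix (Fin n) (Fin n) (WithBot ℝ)) : ℕ → Matrix (Fin n) (Fin n) (WithBot ℝ)
  | 0 => mpId n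
  | k + 1 => mpMul A (mpPow A k)

/-- The max-plus trace: the maximum of the diagonal entries. -/
def mpTrace {n : ℕ} (M : Matrix (Fin n) (Fin n) (WithBot ℝ)) : WithBot ℝ :=
  Finset.univ.sup fun i => M i i

/-- A max-plus matrix is *irreducible* if no simultaneous row/column permutation puts it in
block upper-triangular form (with two nontrivial square diagonal blocks and an `ε`-block
below the diagonal). -/
def MPIrred {n : ℕ} (A : Matrix (Fin n) (Fin n) (WithBot ℝ)) : Prop :=
  ¬ ∃ (σ : Equiv.Perm (Fin n)) (k : ℕ), 0 < k ∧ k < n ∧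
      ∀ i j : Fin n, k ≤ (i : ℕ) → (j : ℕ) < k → A (σ i) (σ j) = ⊥

lemma add_fsup {ι : Type*} (a : WithBot ℝ) (s : Finset ι) (f : ι → WithBot ℝ) :
    a + s.sup f = s.sup fun i => a + f i :=
  Finset.comp_sup_eq_sup_comp (a + ·) (fun x y => (monotone_id.const_add a).map_sup x y)
    (WithBot.add_bot a)

lemma fsup_add {ι : Type*} (a : WithBot ℝ) (s : Finset ι) (f : ι → WithBot ℝ) :
    s.sup f + a = s.sup fun i => f i + a :=
  Finset.comp_sup_eq_sup_comp (· + a) (fun x y => (monotone_id.add_const a).map_sup x y)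
    (WithBot.bot_add a)

lemma mulVec_assoc {n : ℕ} (A B : Matrix (Fin n) (Fin n) (WithBot ℝ)) (r : Fin n → WithBot ℝ) :
    mpMulVec (mpMul A B) r = mpMulVec A (mpMulVec B r) := by
  funext i
  simp only [mpMulVec, mpMul, Matrix.of_apply]
  simp only [fsup_add, add_fsup]
  rw [Finset.sup_comm]
  simp [add_assoc]

lemma mulVec_pow_succ {n : ℕ} (A : Matrix (Fin n) (Fin n) (WithBot ℝ)) (r : Fin n → WithBot ℝ)
    (k : ℕ) : mpMulVec A (mpMulVec (mpPow A k) r) = mpMulVec (mpPow A (k + 1)) r := by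
  rw [show mpPow A (k + 1) = mpMul A (mpPow A k) from rfl, mulVec_assoc]

/-- **Correctness of the max-plus Power Method (Algorithm 2 of the paper).**  Suppose the
iterates of `r ≠ (ε,…,ε)` under `A` become periodic up to a scalar: `A^{⊗p} ⊗ r =
c ⊗ (A^{⊗q} ⊗ r)` with `p > q ≥ 0` and `c ≥ 0`.  Set `λ = c/(p−q)` and
`v = ⊕_{i=1}^{p−q} λ^{⊗(p−q−i)} ⊗ A^{⊗(q+i−1)} ⊗ r`.  If `v ≠ (ε,…,ε)`, then `λ` is an
eigenvalue of `A` with eigenvector `v`: `A ⊗ v = λ ⊗ v`. -/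
theorem stmt_11 {n : ℕ} (A : Matrix (Fin n) (Fin n) (WithBot ℝ)) (r : Fin n → WithBot ℝ)
    (hr : ¬ ∀ s, r s = ⊥) (p q : ℕ) (hpq : q < p) (c : ℝ) (hc : 0 ≤ c)
    (hcyc : ∀ s, mpMulVec (mpPow A p) r s = ((c : ℝ) : WithBot ℝ) + mpMulVec (mpPow A q) r s)
    (lam : ℝ) (hlam : lam = c / ((p - q : ℕ) : ℝ))
    (v : Fin n → WithBot ℝ)
    (hv : ∀ s, v s = (Finset.Icc 1 (p - q)).sup
        fun i => ((((p - q - i : ℕ) : ℝ) * lam : ℝ) : WithBot ℝ)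
          + mpMulVec (mpPow A (q + i - 1)) r s)
    (hvne : ¬ ∀ s, v s = ⊥) :
    ∀ s, mpMulVec A v s = ((lam : ℝ) : WithBot ℝ) + v s := by
  intro s
  set d := p - q with hd
  have hd0 : 0 < d := Nat.sub_pos_of_lt hpq
  have hcd : c = (d : ℝ) * lam := by
    rw [hlam]
    field_simp
  set F : ℕ → WithBot ℝ := fun i =>
    ((((d - i : ℕ) : ℝ) * lam : ℝ) : WithBot ℝ) + mpMulVec (mpPow A (q + i)) r s with hF
  set G : ℕ → WithBot ℝ := fun i =>
    ((((d - (i - 1) : ℕ) : ℝ) * lam : ℝ) : WithBot ℝ) + mpMulVec (mpPow A (q + i - 1)) r s with hG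
  have hqd : q + d = p := by omega
  have hF0 : F d = F 0 := by
    simp only [hF, Nat.sub_self, Nat.sub_zero, Nat.add_zero, hqd]
    rw [hcyc s, ← add_assoc, ← WithBot.coe_add, hcd]
    norm_num
  have hFG : ∀ i, F i = G (i + 1) := by
    intro i
    simp only [hF, hG, show q + (i + 1) - 1 = q + i from by omega, Nat.add_sub_cancel]
  have hG1 : G 1 = F 0 := by
    simp only [hF, hG]
    norm_num
  -- LHS
  have hL : mpMulVec A v s = (Finset.Icc 1 d).sup F := by
    have h1 : mpMulVec A v s = (Finset.Icc 1 d).sup fun i =>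
        ((((d - i : ℕ) : ℝ) * lam : ℝ) : WithBot ℝ) +
          mpMulVec A (mpMulVec (mpPow A (q + i - 1)) r) s := by
      show (Finset.univ.sup fun j => A s j + v j) = _
      calc (Finset.univ.sup fun j => A s j + v j)
          = Finset.univ.sup fun j => (Finset.Icc 1 d).sup fun i =>
              A s j + (((((d - i : ℕ) : ℝ) * lam : ℝ) : WithBot ℝ) +
                mpMulVec (mpPow A (q + i - 1)) r j) := by
            refine Finset.sup_congr rfl fun j _ => ?_
            rw [hv j, add_fsup]
        _ = (Finset.Icc 1 d).sup fun i => Finset.univ.sup fun j =>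
              A s j + (((((d - i : ℕ) : ℝ) * lam : ℝ) : WithBot ℝ) +
                mpMulVec (mpPow A (q + i - 1)) r j) := Finset.sup_comm _ _ _
        _ = _ := by
            refine Finset.sup_congr rfl fun i _ => ?_
            rw [show mpMulVec A (mpMulVec (mpPow A (q + i - 1)) r) s =
                Finset.univ.sup (fun j => A s j + mpMulVec (mpPow A (q + i - 1)) r j) from rfl,
              add_fsup]
            refine Finset.sup_congr rfl fun j _ => ?_
            rw [add_left_comm]
    rw [h1]
    refine Finset.sup_congr rfl fun i hi => ?_
    have hi1 : 1 ≤ i := (Finset.mem_Icc.mp hi).1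
    rw [mulVec_pow_succ, show q + i - 1 + 1 = q + i by omega]
  -- RHS
  have hR : ((lam : ℝ) : WithBot ℝ) + v s = (Finset.Icc 1 d).sup G := by
    rw [hv s, add_fsup]
    refine Finset.sup_congr rfl fun i hi => ?_
    obtain ⟨hi1, hi2⟩ := Finset.mem_Icc.mp hi
    rw [← add_assoc, ← WithBot.coe_add, hG]
    have : lam + ((d - i : ℕ) : ℝ) * lam = ((d - (i - 1) : ℕ) : ℝ) * lam := by
      have h1 : (d - (i - 1)) = (d - i) + 1 := by omega
      rw [h1]
      push_cast
      ring
    rw [this]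
  rw [hL, hR]
  apply le_antisymm
  · refine Finset.sup_le fun i hi => ?_
    obtain ⟨hi1, hi2⟩ := Finset.mem_Icc.mp hi
    rcases eq_or_lt_of_le hi2 with h | h
    · calc F i = F d := by rw [h]
        _ = F 0 := hF0
        _ = G 1 := hG1.symm
        _ ≤ _ := Finset.le_sup (Finset.mem_Icc.mpr ⟨le_refl 1, hd0⟩)
    · calc F i = G (i + 1) := hFG i
        _ ≤ _ := Finset.le_sup (Finset.mem_Icc.mpr ⟨by omega, by omega⟩)
  · refine Finset.sup_le fun i hi => ?_
    obtain ⟨hi1, hi2⟩ := Finset.mem_Icc.mp hi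
    rcases eq_or_lt_of_le hi1 with h | h
    · calc G i = G 1 := by rw [← h]
        _ = F 0 := hG1
        _ = F d := hF0.symm
        _ ≤ _ := Finset.le_sup (Finset.mem_Icc.mpr ⟨hd0, le_refl d⟩)
    · calc G i = F (i - 1) := by rw [hFG (i - 1), show i - 1 + 1 = i by omega]
        _ ≤ _ := Finset.le_sup (Finset.mem_Icc.mpr ⟨by omega, by omega⟩)
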